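/- Let h(x) = (2/3)·x(2 − x) / (2 − x(2 − x))². Then (i) for every x ∈ [0,1], h(x) = ∫_{[0,1]²} 1{ξ₁ < min(ξ₂, x)} · (h(x) + h(ξ₁) + h(ξ₂)) dξ₁dξ₂, and (ii) ∫₀¹ h(x) dx = 1/3. Consequently the function g(x₁,x₂,x₃) = Σ_{ν=1}^3 h(x_ν) is a probability density on [0,1]³ and is a fixed point of the one-step density recursion of the anisotropic Bak–Sneppen model with three species; i.e., μ(d³x) = (2/3)·[Σ_{ν=1}^3 x_ν(2−x_ν)/(2−x_ν(2−x_ν))²]·1_{[0,1]³}(x) dx is its asymptotic fitness distribution. -/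

import Mathlib

open MeasureTheory

/-- The limiting single-site density `h` of the three-species anisotropic
Bak–Sneppen model. -/
noncomputable def aBsH (x : ℝ) : ℝ :=
  (2 / 3) * (x * (2 - x)) / (2 - x * (2 - x)) ^ 2

lemma Dpos (t : ℝ) : 0 < (2 - t * (2 - t)) := by nlinarith [sq_nonneg (t-1)]
lemma Dpos' (t : ℝ) : 0 < t^2 - 2*t + 2 := by nlinarith [sq_nonneg (t-1)]

lemma aBsH_cont : Continuous aBsH := by
  apply Continuous.div (by continuity) (by continuity)
  intro t; exact pow_ne_zero 2 (Dpos t).ne'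

noncomputable def Hfun (t : ℝ) : ℝ := 2/3 * (t - 1) / (t^2 - 2*t + 2) + 1/3

lemma Hfun_cont : Continuous Hfun := by
  apply Continuous.add (Continuous.div (by continuity) (by continuity)
    (fun t => (Dpos' t).ne')) continuous_const

lemma Hfun_deriv (t : ℝ) : HasDerivAt Hfun (aBsH t) t := by
  have h1 : HasDerivAt (fun t : ℝ => 2/3 * (t - 1)) (2/3) t := by
    simpa using ((hasDerivAt_id t).sub_const 1).const_mul (2/3:ℝ)
  have h2 : HasDerivAt (fun t : ℝ => t^2 - 2*t + 2) (2*t - 2) t := by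
    have := ((hasDerivAt_pow 2 t).sub ((hasDerivAt_id t).const_mul 2)).add_const 2
    simpa using this
  have := (h1.div h2 (Dpos' t).ne').add_const (1/3:ℝ)
  refine this.congr_deriv (Eq.symm ?_)
  have e : (2 - t*(2-t)) = t^2-2*t+2 := by ring
  unfold aBsH
  rw [e, div_eq_div_iff (pow_ne_zero 2 (Dpos' t).ne') (pow_ne_zero 2 (Dpos' t).ne')]
  ring

lemma intH (a b : ℝ) : ∫ t in a..b, aBsH t = Hfun b - Hfun a :=
  intervalIntegral.integral_eq_sub_of_hasDerivAt (fun t _ => Hfun_deriv t)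
    (aBsH_cont.intervalIntegrable a b)

lemma inner_int (x ξ₁ : ℝ) (h0 : 0 ≤ ξ₁) (h1 : ξ₁ ≤ 1) :
    (∫ ξ₂ in (0:ℝ)..1, if ξ₁ < min ξ₂ x then aBsH x + aBsH ξ₁ + aBsH ξ₂ else 0)
    = if ξ₁ < x then (aBsH x + aBsH ξ₁) * (1 - ξ₁) + (1/3 - Hfun ξ₁) else 0 := by
  by_cases hlt : ξ₁ < x
  · rw [if_pos hlt]
    have heq : ∀ ξ₂ : ℝ, (if ξ₁ < min ξ₂ x then aBsH x + aBsH ξ₁ + aBsH ξ₂ else 0)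
        = Set.indicator (Set.Ioi ξ₁) (fun ξ₂ => aBsH x + aBsH ξ₁ + aBsH ξ₂) ξ₂ := by
      intro ξ₂; rw [Set.indicator_apply]
      simp [lt_min_iff, hlt, Set.mem_Ioi]
    simp_rw [heq]
    have hcont : Continuous (fun ξ₂ : ℝ => aBsH x + aBsH ξ₁ + aBsH ξ₂) :=
      continuous_const.add aBsH_cont
    have hint : ∀ a b : ℝ, IntervalIntegrable
        (Set.indicator (Set.Ioi ξ₁) (fun ξ₂ => aBsH x + aBsH ξ₁ + aBsH ξ₂)) volume a b := by
      intro a b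
      rw [intervalIntegrable_iff]
      have : IntervalIntegrable (fun ξ₂ : ℝ => aBsH x + aBsH ξ₁ + aBsH ξ₂) volume a b :=
        hcont.intervalIntegrable a b
      rw [intervalIntegrable_iff] at this
      exact this.indicator measurableSet_Ioi
    rw [← intervalIntegral.integral_add_adjacent_intervals (hint 0 ξ₁) (hint ξ₁ 1)]
    have hz : (∫ ξ₂ in (0:ℝ)..ξ₁,
        Set.indicator (Set.Ioi ξ₁) (fun ξ₂ => aBsH x + aBsH ξ₁ + aBsH ξ₂) ξ₂) = 0 := by
      rw [intervalIntegral.integral_congr (g := fun _ => (0:ℝ))]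
      · simp
      · intro ξ₂ hmem
        rw [Set.uIcc_of_le h0] at hmem
        exact Set.indicator_of_notMem (by simpa using hmem.2) _
    have h2 : (∫ ξ₂ in ξ₁..(1:ℝ),
        Set.indicator (Set.Ioi ξ₁) (fun ξ₂ => aBsH x + aBsH ξ₁ + aBsH ξ₂) ξ₂)
        = ∫ ξ₂ in ξ₁..(1:ℝ), (aBsH x + aBsH ξ₁ + aBsH ξ₂) := by
      apply intervalIntegral.integral_congr_ae
      apply Filter.Eventually.of_forall
      intro ξ₂ hmem
      rw [Set.uIoc_of_le h1] at hmem
      exact Set.indicator_of_mem hmem.1 _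
    rw [hz, h2, zero_add]
    have : (∫ ξ₂ in ξ₁..(1:ℝ), (aBsH x + aBsH ξ₁ + aBsH ξ₂))
        = ∫ ξ₂ in ξ₁..(1:ℝ), ((aBsH x + aBsH ξ₁) + aBsH ξ₂) := by norm_num
    rw [this, intervalIntegral.integral_add (intervalIntegrable_const)
      (aBsH_cont.intervalIntegrable _ _), intervalIntegral.integral_const, intH]
    have : Hfun 1 = 1/3 := by unfold Hfun; norm_num
    rw [this]
    simp [smul_eq_mul]
    ring
  · rw [if_neg hlt]
    have : ∀ ξ₂ : ℝ, (if ξ₁ < min ξ₂ x then aBsH x + aBsH ξ₁ + aBsH ξ₂ else 0) = 0 := by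
      intro ξ₂; rw [if_neg]; rw [lt_min_iff]; tauto
    simp_rw [this]
    simp

noncomputable def psi (x t : ℝ) : ℝ := (aBsH x + aBsH t) * (1 - t) + (1/3 - Hfun t)
noncomputable def Phi (x t : ℝ) : ℝ := aBsH x * (t - t^2/2) + (2/3)/(t^2 - 2*t + 2)

lemma psi_cont (x : ℝ) : Continuous (psi x) := by
  unfold psi
  exact ((continuous_const.add aBsH_cont).mul (by continuity)).add
    (continuous_const.sub Hfun_cont)

lemma Phi_deriv (x t : ℝ) : HasDerivAt (Phi x) (psi x t) t := by
  have h1 : HasDerivAt (fun t : ℝ => t - t^2/2) (1 - t) t := by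
    have := (hasDerivAt_id t).sub ((hasDerivAt_pow 2 t).div_const 2)
    exact this.congr_deriv (by norm_num)
  have h2 : HasDerivAt (fun t : ℝ => t^2 - 2*t + 2) (2*t - 2) t := by
    have := ((hasDerivAt_pow 2 t).sub ((hasDerivAt_id t).const_mul 2)).add_const 2
    simpa using this
  have h3 := (hasDerivAt_const t (2/3:ℝ)).div h2 (Dpos' t).ne'
  have := ((h1.const_mul (aBsH x)).add h3)
  refine this.congr_deriv (Eq.symm ?_)
  unfold psi Hfun
  have e : (2 - t*(2-t)) = t^2-2*t+2 := by ring
  rw [show aBsH t = (2/3) * (t*(2-t)) / (t^2-2*t+2)^2 by unfold aBsH; rw [e]]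
  have hd := (Dpos' t).ne'
  obtain ⟨D, hD⟩ : ∃ D, D = t^2-2*t+2 := ⟨_, rfl⟩
  rw [← hD] at hd ⊢
  field_simp
  subst hD
  ring

lemma core (x : ℝ) (hx : x ∈ Set.Icc (0:ℝ) 1) :
    (∫ ξ₁ in (0:ℝ)..1, ∫ ξ₂ in (0:ℝ)..1,
      if ξ₁ < min ξ₂ x then aBsH x + aBsH ξ₁ + aBsH ξ₂ else 0) = aBsH x := by
  obtain ⟨hx0, hx1⟩ := hx
  have step1 : (∫ ξ₁ in (0:ℝ)..1, ∫ ξ₂ in (0:ℝ)..1,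
      if ξ₁ < min ξ₂ x then aBsH x + aBsH ξ₁ + aBsH ξ₂ else 0)
      = ∫ ξ₁ in (0:ℝ)..1, Set.indicator (Set.Iio x) (psi x) ξ₁ := by
    apply intervalIntegral.integral_congr_ae
    apply Filter.Eventually.of_forall
    intro ξ₁ hmem
    rw [Set.uIoc_of_le (by norm_num : (0:ℝ) ≤ 1)] at hmem
    rw [inner_int x ξ₁ hmem.1.le hmem.2, Set.indicator_apply]
    simp only [Set.mem_Iio]
    rfl
  rw [step1]
  have hint : ∀ a b : ℝ, IntervalIntegrable
      (Set.indicator (Set.Iio x) (psi x)) volume a b := by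
    intro a b
    rw [intervalIntegrable_iff]
    have : IntervalIntegrable (psi x) volume a b := (psi_cont x).intervalIntegrable a b
    rw [intervalIntegrable_iff] at this
    exact this.indicator measurableSet_Iio
  rw [← intervalIntegral.integral_add_adjacent_intervals (hint 0 x) (hint x 1)]
  have hz : (∫ ξ₁ in x..(1:ℝ), Set.indicator (Set.Iio x) (psi x) ξ₁) = 0 := by
    rw [intervalIntegral.integral_congr (g := fun _ => (0:ℝ))]
    · simp
    · intro ξ₁ hmem
      rw [Set.uIcc_of_le hx1] at hmem
      exact Set.indicator_of_notMem (by simp [hmem.1]) _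
  have h2 : (∫ ξ₁ in (0:ℝ)..x, Set.indicator (Set.Iio x) (psi x) ξ₁)
      = ∫ ξ₁ in (0:ℝ)..x, psi x ξ₁ := by
    apply intervalIntegral.integral_congr_ae
    have hns : ∀ᵐ ξ₁ : ℝ ∂volume, ξ₁ ∉ ({x} : Set ℝ) :=
      measure_eq_zero_iff_ae_notMem.mp Real.volume_singleton
    filter_upwards [hns] with ξ₁ hne hmem
    rw [Set.uIoc_of_le hx0] at hmem
    exact Set.indicator_of_mem
      (Set.mem_Iio.mpr (lt_of_le_of_ne hmem.2 (by simpa using hne))) (psi x)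
  rw [hz, h2, add_zero]
  rw [intervalIntegral.integral_eq_sub_of_hasDerivAt (fun t _ => Phi_deriv x t)
    ((psi_cont x).intervalIntegrable 0 x)]
  unfold Phi
  have e : (2 - x*(2-x)) = x^2-2*x+2 := by ring
  rw [show aBsH x = (2/3) * (x*(2-x)) / (x^2-2*x+2)^2 by unfold aBsH; rw [e]]
  have hd := (Dpos' x).ne'
  obtain ⟨D, hD⟩ : ∃ D, D = x^2-2*x+2 := ⟨_, rfl⟩
  rw [← hD] at hd ⊢
  field_simp
  subst hD
  ring

lemma intII : (∫ x in (0:ℝ)..1, aBsH x) = 1/3 := by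
  rw [intH]; unfold Hfun; norm_num

lemma icc_int : (∫ t in Set.Icc (0:ℝ) 1, aBsH t) = 1/3 := by
  rw [MeasureTheory.integral_Icc_eq_integral_Ioc,
    ← intervalIntegral.integral_of_le (by norm_num : (0:ℝ) ≤ 1)]
  exact intII

lemma box_int (ν : Fin 3) :
    (∫ x in (Set.univ.pi fun _ : Fin 3 => Set.Icc (0 : ℝ) 1), aBsH (x ν)) = 1/3 := by
  classical
  have hms : MeasurableSet (Set.univ.pi fun _ : Fin 3 => Set.Icc (0 : ℝ) 1) :=
    MeasurableSet.univ_pi (fun _ => measurableSet_Icc)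
  rw [← MeasureTheory.integral_indicator hms]
  have heq : (Set.univ.pi fun _ : Fin 3 => Set.Icc (0 : ℝ) 1).indicator
      (fun x : Fin 3 → ℝ => aBsH (x ν))
      = fun x : Fin 3 → ℝ => ∏ i : Fin 3,
        (Set.Icc (0:ℝ) 1).indicator (fun t => if i = ν then aBsH t else 1) (x i) := by
    funext x
    by_cases hx : x ∈ Set.univ.pi fun _ : Fin 3 => Set.Icc (0 : ℝ) 1
    · rw [Set.indicator_of_mem hx]
      have : ∀ i : Fin 3, (Set.Icc (0:ℝ) 1).indicator
          (fun t => if i = ν then aBsH t else 1) (x i)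
          = if i = ν then aBsH (x i) else 1 := fun i =>
        Set.indicator_of_mem (hx i (Set.mem_univ i)) _
      simp_rw [this]
      simp
    · rw [Set.indicator_of_notMem hx]
      rw [Set.mem_pi] at hx
      push_neg at hx
      obtain ⟨i, _, hi⟩ := hx
      exact (Finset.prod_eq_zero (Finset.mem_univ i) (Set.indicator_of_notMem hi _)).symm
  rw [heq, MeasureTheory.integral_fintype_prod_volume_eq_prod (𝕜 := ℝ)
    (f := fun (i : Fin 3) (t : ℝ) => (Set.Icc (0:ℝ) 1).indicator
      (fun t => if i = ν then aBsH t else 1) t)]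
  have hval : ∀ i : Fin 3, (∫ t : ℝ, (Set.Icc (0:ℝ) 1).indicator
      (fun t => if i = ν then aBsH t else 1) t) = if i = ν then 1/3 else 1 := by
    intro i
    rw [MeasureTheory.integral_indicator measurableSet_Icc]
    by_cases h : i = ν
    · simp only [h, if_pos rfl]
      simpa using icc_int
    · simp only [if_neg h]
      simp [Real.volume_Icc]
  simp_rw [hval]
  simp [Finset.prod_ite_eq]

lemma core_perm1 (t : ℝ) (ht : t ∈ Set.Icc (0:ℝ) 1) :
    (∫ ξ₁ in (0:ℝ)..1, ∫ ξ₂ in (0:ℝ)..1,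
      if ξ₁ < min ξ₂ t then aBsH ξ₁ + aBsH ξ₂ + aBsH t else 0) = aBsH t := by
  have h : (∫ ξ₁ in (0:ℝ)..1, ∫ ξ₂ in (0:ℝ)..1,
      if ξ₁ < min ξ₂ t then aBsH ξ₁ + aBsH ξ₂ + aBsH t else 0)
      = ∫ ξ₁ in (0:ℝ)..1, ∫ ξ₂ in (0:ℝ)..1,
      if ξ₁ < min ξ₂ t then aBsH t + aBsH ξ₁ + aBsH ξ₂ else 0 := by
    apply intervalIntegral.integral_congr
    intro ξ₁ _
    apply intervalIntegral.integral_congr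
    intro ξ₂ _
    by_cases hc : ξ₁ < min ξ₂ t
    · simp only [if_pos hc]; ring
    · simp only [if_neg hc]
  rw [h]
  exact core t ht

lemma core_perm2 (t : ℝ) (ht : t ∈ Set.Icc (0:ℝ) 1) :
    (∫ ξ₁ in (0:ℝ)..1, ∫ ξ₂ in (0:ℝ)..1,
      if ξ₁ < min ξ₂ t then aBsH ξ₂ + aBsH t + aBsH ξ₁ else 0) = aBsH t := by
  have h : (∫ ξ₁ in (0:ℝ)..1, ∫ ξ₂ in (0:ℝ)..1,
      if ξ₁ < min ξ₂ t then aBsH ξ₂ + aBsH t + aBsH ξ₁ else 0)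
      = ∫ ξ₁ in (0:ℝ)..1, ∫ ξ₂ in (0:ℝ)..1,
      if ξ₁ < min ξ₂ t then aBsH t + aBsH ξ₁ + aBsH ξ₂ else 0 := by
    apply intervalIntegral.integral_congr
    intro ξ₁ _
    apply intervalIntegral.integral_congr
    intro ξ₂ _
    by_cases hc : ξ₁ < min ξ₂ t
    · simp only [if_pos hc]; ring
    · simp only [if_neg hc]
  rw [h]
  exact core t ht

/-- (i) `h` satisfies the one-step fixed-point equation of the anisotropic model and
(ii) `∫₀¹ h = 1/3`; consequently `g(x) = Σ_ν h(x_ν)` is a probability density on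
`[0,1]³` and a fixed point of the one-step density recursion of the three-species
anisotropic Bak–Sneppen model (indices mod 3), i.e. the corresponding measure is its
asymptotic fitness distribution. -/
theorem aBs3_stationary_distribution :
    (∀ x ∈ Set.Icc (0 : ℝ) 1,
      aBsH x = ∫ ξ₁ in (0:ℝ)..1, ∫ ξ₂ in (0:ℝ)..1,
        if ξ₁ < min ξ₂ x then aBsH x + aBsH ξ₁ + aBsH ξ₂ else 0)
    ∧ (∫ x in (0:ℝ)..1, aBsH x) = 1 / 3
    ∧ (∀ x : Fin 3 → ℝ, (∀ ν, x ν ∈ Set.Icc (0 : ℝ) 1) → 0 ≤ ∑ ν : Fin 3, aBsH (x ν))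
    ∧ (∫ x in (Set.univ.pi fun _ : Fin 3 => Set.Icc (0 : ℝ) 1),
        ∑ ν : Fin 3, aBsH (x ν)) = 1
    ∧ ∀ x : Fin 3 → ℝ, (∀ ν, x ν ∈ Set.Icc (0 : ℝ) 1) →
        (∑ ν : Fin 3, aBsH (x ν))
          = ∑ ν : Fin 3, ∫ ξ₁ in (0:ℝ)..1, ∫ ξ₂ in (0:ℝ)..1,
              if ξ₁ < min ξ₂ (x (ν - 1)) then
                ∑ μ : Fin 3, aBsH ((Function.update (Function.update x ν ξ₁) (ν + 1) ξ₂) μ)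
              else 0 := by
  refine ⟨fun x hx => (core x hx).symm, intII, ?_, ?_, ?_⟩
  · intro x hx
    apply Finset.sum_nonneg
    intro ν _
    obtain ⟨h0, h1⟩ := hx ν
    unfold aBsH
    apply div_nonneg
    · nlinarith
    · positivity
  · have hcomp : IsCompact (Set.univ.pi fun _ : Fin 3 => Set.Icc (0 : ℝ) 1) :=
      isCompact_univ_pi (fun _ => isCompact_Icc)
    have hint : ∀ ν : Fin 3, IntegrableOn (fun x : Fin 3 → ℝ => aBsH (x ν))
        (Set.univ.pi fun _ : Fin 3 => Set.Icc (0 : ℝ) 1) volume := fun ν =>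
      ((aBsH_cont.comp (continuous_apply ν)).continuousOn).integrableOn_compact hcomp
    rw [MeasureTheory.integral_finset_sum (f := fun (ν : Fin 3) (x : Fin 3 → ℝ) => aBsH (x ν))
      Finset.univ (fun ν _ => hint ν)]
    simp_rw [box_int]
    norm_num
  · intro x hx
    simp only [Fin.sum_univ_three]
    have s0 : ∀ ξ₁ ξ₂ : ℝ, (aBsH ((Function.update (Function.update x (0:Fin 3) ξ₁) ((0:Fin 3) + 1) ξ₂) 0) + aBsH ((Function.update (Function.update x (0:Fin 3) ξ₁) ((0:Fin 3) + 1) ξ₂) 1) + aBsH ((Function.update (Function.update x (0:Fin 3) ξ₁) ((0:Fin 3) + 1) ξ₂) 2))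
        = aBsH ξ₁ + aBsH ξ₂ + aBsH (x 2) := by
      intro ξ₁ ξ₂
      simp [Function.update_apply]
    have s1 : ∀ ξ₁ ξ₂ : ℝ, (aBsH ((Function.update (Function.update x (1:Fin 3) ξ₁) ((1:Fin 3) + 1) ξ₂) 0) + aBsH ((Function.update (Function.update x (1:Fin 3) ξ₁) ((1:Fin 3) + 1) ξ₂) 1) + aBsH ((Function.update (Function.update x (1:Fin 3) ξ₁) ((1:Fin 3) + 1) ξ₂) 2))
        = aBsH (x 0) + aBsH ξ₁ + aBsH ξ₂ := by
      intro ξ₁ ξ₂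
      simp [Function.update_apply]
    have s2 : ∀ ξ₁ ξ₂ : ℝ, (aBsH ((Function.update (Function.update x (2:Fin 3) ξ₁) ((2:Fin 3) + 1) ξ₂) 0) + aBsH ((Function.update (Function.update x (2:Fin 3) ξ₁) ((2:Fin 3) + 1) ξ₂) 1) + aBsH ((Function.update (Function.update x (2:Fin 3) ξ₁) ((2:Fin 3) + 1) ξ₂) 2))
        = aBsH ξ₂ + aBsH (x 1) + aBsH ξ₁ := by
      intro ξ₁ ξ₂
      simp [Function.update_apply]
    simp only [s0, s1, s2]
    rw [show ((0:Fin 3) - 1) = 2 by decide, show ((1:Fin 3) - 1) = 0 by decide,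
      show ((2:Fin 3) - 1) = 1 by decide]
    rw [core_perm1 (x 2) (hx 2), core (x 0) (hx 0), core_perm2 (x 1) (hx 1)]
    ring
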